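/- Piecewise Gronwall-type inequality with jumps in the weight: Let T > 0, C ≥ 0, m ≥ 0, and let 0 = s₀ < s₁ < ⋯ < s_n < s_{n+1} = T. Let z : [0,T] → [0,∞) be continuous on [0,T] and continuously differentiable on each open interval (s_i, s_{i+1}), and let Φ : [0,T] → [0,∞) be continuously differentiable and nondecreasing on each (s_i, s_{i+1}), with one-sided limits Φ(s_i−), Φ(s_i+), Φ(0+), Φ(T−) existing. Assume z′(t) + C Φ′(t) z(t) ≥ m for all t in each (s_i, s_{i+1}). Then e^{C Φ(T−)} z(T) + Σ_{i=1}^{n} z(s_i) ( e^{C Φ(s_i−)} − e^{C Φ(s_i+)} ) ≥ e^{C Φ(0+)} z(0) + m T. -/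

import Mathlib

open MeasureTheory Metric Set Filter
open scoped ENNReal NNReal Topology

noncomputable section

/-- Piecewise Gronwall-type inequality with jumps in the weight:
if z′ + C Φ′ z ≥ m on each interval (sᵢ, sᵢ₊₁) of a partition 0 = s₀ < … < s_{n+1} = T,
with z continuous and nonnegative and Φ nonnegative, nondecreasing and C¹ on each open
subinterval, and with one-sided limits Φ(sᵢ±), then
e^{CΦ(T−)} z(T) + Σ_{i=1}^n z(sᵢ)(e^{CΦ(sᵢ−)} − e^{CΦ(sᵢ+)}) ≥ e^{CΦ(0+)} z(0) + mT. -/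
theorem piecewise_gronwall_with_jumps
    (T C m : ℝ) (hT : 0 < T) (hC : 0 ≤ C) (hm : 0 ≤ m)
    (n : ℕ) (s : ℕ → ℝ) (hs0 : s 0 = 0) (hsT : s (n + 1) = T)
    (hmono : ∀ i ≤ n, s i < s (i + 1))
    (z Φ z' Φ' : ℝ → ℝ) (Φm Φp : ℕ → ℝ)
    (hz_nonneg : ∀ t ∈ Icc 0 T, 0 ≤ z t)
    (hΦ_nonneg : ∀ t ∈ Icc 0 T, 0 ≤ Φ t)
    (hz_cont : ContinuousOn z (Icc 0 T))
    (hz_deriv : ∀ i ≤ n, ∀ t ∈ Ioo (s i) (s (i + 1)), HasDerivAt z (z' t) t)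
    (hz'_cont : ∀ i ≤ n, ContinuousOn z' (Ioo (s i) (s (i + 1))))
    (hΦ_deriv : ∀ i ≤ n, ∀ t ∈ Ioo (s i) (s (i + 1)), HasDerivAt Φ (Φ' t) t)
    (hΦ'_cont : ∀ i ≤ n, ContinuousOn Φ' (Ioo (s i) (s (i + 1))))
    (hΦ_mono : ∀ i ≤ n, MonotoneOn Φ (Ioo (s i) (s (i + 1))))
    (hΦp : ∀ i ≤ n, Tendsto Φ (nhdsWithin (s i) (Ioi (s i))) (nhds (Φp i)))
    (hΦm : ∀ i, 1 ≤ i → i ≤ n + 1 → Tendsto Φ (nhdsWithin (s i) (Iio (s i))) (nhds (Φm i)))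
    (hmain : ∀ i ≤ n, ∀ t ∈ Ioo (s i) (s (i + 1)), m ≤ z' t + C * Φ' t * z t) :
    Real.exp (C * Φp 0) * z 0 + m * T ≤
      Real.exp (C * Φm (n + 1)) * z T
        + ∑ i ∈ Finset.Icc 1 n, z (s i) * (Real.exp (C * Φm i) - Real.exp (C * Φp i)) := by
  -- monotonicity of the partition
  have hmono' : ∀ i j, i ≤ j → j ≤ n + 1 → s i ≤ s j := by
    intro i j hij hj
    induction j with
    | zero => simp_all
    | succ k ih =>
      rcases Nat.eq_or_lt_of_le hij with rfl | h
      · exact le_rfl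
      · have hk : k ≤ n := Nat.lt_succ_iff.mp hj
        exact le_trans (ih (Nat.lt_succ_iff.mp h) (le_trans (Nat.le_succ k) hj))
          (hmono k hk).le
  have hs_mem : ∀ i ≤ n + 1, s i ∈ Icc (0:ℝ) T := by
    intro i hi
    constructor
    · rw [← hs0]; exact hmono' 0 i (Nat.zero_le i) hi
    · rw [← hsT]; exact hmono' i (n+1) hi le_rfl
  -- key estimate on each subinterval
  have key : ∀ i ≤ n,
      Real.exp (C * Φp i) * z (s i) + m * (s (i+1) - s i)
        ≤ Real.exp (C * Φm (i+1)) * z (s (i+1)) := by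
    intro i hi
    set a := s i with ha_def
    set b := s (i+1) with hb_def
    have hab : a < b := hmono i hi
    have haI : a ∈ Icc (0:ℝ) T := hs_mem i (le_trans hi (Nat.le_succ n))
    have hbI : b ∈ Icc (0:ℝ) T := hs_mem (i+1) (Nat.succ_le_succ hi)
    have hsub : Ioo a b ⊆ Icc (0:ℝ) T := fun t ht =>
      ⟨le_trans haI.1 ht.1.le, le_trans ht.2.le hbI.2⟩
    set f : ℝ → ℝ := fun t => Real.exp (C * Φ t) * z t - m * t with hf_def
    have hfderiv : ∀ t ∈ Ioo a b,
        HasDerivAt f (Real.exp (C * Φ t) * (C * Φ' t) * z t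
          + Real.exp (C * Φ t) * z' t - m) t := by
      intro t ht
      have h1 : HasDerivAt (fun t => Real.exp (C * Φ t))
          (Real.exp (C * Φ t) * (C * Φ' t)) t :=
        ((hΦ_deriv i hi t ht).const_mul C).exp
      have h2 := (h1.mul (hz_deriv i hi t ht)).sub ((hasDerivAt_id t).const_mul m)
      exact h2.congr_deriv (by ring)
    have hf'nonneg : ∀ t ∈ Ioo a b,
        0 ≤ Real.exp (C * Φ t) * (C * Φ' t) * z t + Real.exp (C * Φ t) * z' t - m := by
      intro t ht
      have hzt : 0 ≤ z t := hz_nonneg t (hsub ht)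
      have hΦt : 0 ≤ Φ t := hΦ_nonneg t (hsub ht)
      have hexp1 : 1 ≤ Real.exp (C * Φ t) := Real.one_le_exp (mul_nonneg hC hΦt)
      have hmt := hmain i hi t ht
      have h3 : Real.exp (C * Φ t) * m ≤ Real.exp (C * Φ t) * (z' t + C * Φ' t * z t) :=
        mul_le_mul_of_nonneg_left hmt (Real.exp_pos _).le
      nlinarith [Real.exp_pos (C * Φ t)]
    have hfmono : MonotoneOn f (Ioo a b) := by
      have hcont : ContinuousOn f (Ioo a b) := fun t ht =>
        (hfderiv t ht).continuousAt.continuousWithinAt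
      refine monotoneOn_of_hasDerivWithinAt_nonneg (convex_Ioo a b) hcont
        (f' := fun t => Real.exp (C * Φ t) * (C * Φ' t) * z t
          + Real.exp (C * Φ t) * z' t - m) ?_ ?_
      · intro t ht
        rw [interior_Ioo] at ht ⊢
        exact (hfderiv t ht).hasDerivWithinAt
      · intro t ht
        rw [interior_Ioo] at ht
        exact hf'nonneg t ht
    -- limits at the endpoints
    have hfa : Tendsto f (𝓝[Ioo a b] a) (𝓝 (Real.exp (C * Φp i) * z a - m * a)) := by
      have hΦa : Tendsto Φ (𝓝[Ioo a b] a) (𝓝 (Φp i)) := by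
        rw [nhdsWithin_Ioo_eq_nhdsGT hab]; exact hΦp i hi
      have hza : Tendsto z (𝓝[Ioo a b] a) (𝓝 (z a)) :=
        (hz_cont a haI).mono_left (nhdsWithin_mono a hsub)
      have hexpa : Tendsto (fun t => Real.exp (C * Φ t)) (𝓝[Ioo a b] a)
          (𝓝 (Real.exp (C * Φp i))) :=
        (Real.continuous_exp.tendsto _).comp (tendsto_const_nhds.mul hΦa)
      exact (hexpa.mul hza).sub
        (tendsto_const_nhds.mul (tendsto_nhdsWithin_of_tendsto_nhds tendsto_id))
    have hfb : Tendsto f (𝓝[Ioo a b] b) (𝓝 (Real.exp (C * Φm (i+1)) * z b - m * b)) := by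
      have hΦb : Tendsto Φ (𝓝[Ioo a b] b) (𝓝 (Φm (i+1))) := by
        rw [nhdsWithin_Ioo_eq_nhdsLT hab]
        exact hΦm (i+1) (Nat.succ_le_succ (Nat.zero_le i)) (Nat.succ_le_succ hi)
      have hzb : Tendsto z (𝓝[Ioo a b] b) (𝓝 (z b)) :=
        (hz_cont b hbI).mono_left (nhdsWithin_mono b hsub)
      have hexpb : Tendsto (fun t => Real.exp (C * Φ t)) (𝓝[Ioo a b] b)
          (𝓝 (Real.exp (C * Φm (i+1)))) :=
        (Real.continuous_exp.tendsto _).comp (tendsto_const_nhds.mul hΦb)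
      exact (hexpb.mul hzb).sub
        (tendsto_const_nhds.mul (tendsto_nhdsWithin_of_tendsto_nhds tendsto_id))
    set c : ℝ := (a + b) / 2 with hc_def
    have hcmem : c ∈ Ioo a b := ⟨by linarith, by linarith⟩
    have hne_a : (𝓝[Ioo a b] a).NeBot := by
      rw [nhdsWithin_Ioo_eq_nhdsGT hab]; infer_instance
    have hne_b : (𝓝[Ioo a b] b).NeBot := by
      rw [nhdsWithin_Ioo_eq_nhdsLT hab]; infer_instance
    have h1 : Real.exp (C * Φp i) * z a - m * a ≤ f c := by
      have hmem : Ioo a c ∈ 𝓝[Ioo a b] a := by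
        rw [nhdsWithin_Ioo_eq_nhdsGT hab]
        exact Ioo_mem_nhdsGT_of_mem ⟨le_rfl, hcmem.1⟩
      refine le_of_tendsto hfa (Filter.eventually_of_mem hmem fun t ht => ?_)
      exact hfmono ⟨ht.1, ht.2.trans hcmem.2⟩ hcmem ht.2.le
    have h2 : f c ≤ Real.exp (C * Φm (i+1)) * z b - m * b := by
      have hmem : Ioo c b ∈ 𝓝[Ioo a b] b := by
        rw [nhdsWithin_Ioo_eq_nhdsLT hab]
        exact Ioo_mem_nhdsLT_of_mem ⟨hcmem.2, le_rfl⟩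
      refine ge_of_tendsto hfb (Filter.eventually_of_mem hmem fun t ht => ?_)
      exact hfmono hcmem ⟨hcmem.1.trans ht.1, ht.2⟩ ht.1.le
    linarith
  -- summation and telescoping
  set A : ℕ → ℝ := fun i => Real.exp (C * Φm i) * z (s i) with hA_def
  set B : ℕ → ℝ := fun i => Real.exp (C * Φp i) * z (s i) with hB_def
  have hsum : ∑ i ∈ Finset.range (n+1), (B i + m * (s (i+1) - s i))
      ≤ ∑ i ∈ Finset.range (n+1), A (i+1) :=
    Finset.sum_le_sum fun i hi => key i (Nat.lt_succ_iff.mp (Finset.mem_range.mp hi))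
  have htel : ∑ i ∈ Finset.range (n+1), (s (i+1) - s i) = T := by
    rw [Finset.sum_range_sub, hs0, hsT, sub_zero]
  have hsum1 : ∑ i ∈ Finset.range (n+1), (B i + m * (s (i+1) - s i))
      = ∑ i ∈ Finset.range (n+1), B i + m * T := by
    rw [Finset.sum_add_distrib, ← Finset.mul_sum, htel]
  have hA' : ∑ i ∈ Finset.range (n+1), A (i+1)
      = A (n+1) + ∑ i ∈ Finset.range n, A (i+1) := by
    rw [Finset.sum_range_succ]; ring
  have hB' : ∑ i ∈ Finset.range (n+1), B i
      = B 0 + ∑ i ∈ Finset.range n, B (i+1) := (Finset.sum_range_succ' B n).trans (add_comm _ _)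
  have hIcc : ∀ g : ℕ → ℝ, ∑ i ∈ Finset.Icc 1 n, g i = ∑ i ∈ Finset.range n, g (i+1) := by
    intro g
    rw [← Finset.Ico_add_one_right_eq_Icc, Finset.sum_Ico_eq_sum_range]
    simp [add_comm]
  have hgoal : ∑ i ∈ Finset.Icc 1 n, z (s i) * (Real.exp (C * Φm i) - Real.exp (C * Φp i))
      = ∑ i ∈ Finset.range n, (A (i+1) - B (i+1)) := by
    rw [hIcc]
    exact Finset.sum_congr rfl fun i _ => by simp [hA_def, hB_def]; ring
  have hsplit : ∑ i ∈ Finset.range n, (A (i+1) - B (i+1))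
      = ∑ i ∈ Finset.range n, A (i+1) - ∑ i ∈ Finset.range n, B (i+1) :=
    Finset.sum_sub_distrib _ _
  have hB0 : B 0 = Real.exp (C * Φp 0) * z 0 := by rw [hB_def]; simp [hs0]
  have hAn : A (n+1) = Real.exp (C * Φm (n+1)) * z T := by rw [hA_def]; simp [hsT]
  rw [hgoal, hsplit, ← hAn, ← hB0]
  rw [hsum1, hA'] at hsum
  rw [hB'] at hsum
  linarith

end
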